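/- Complementation C maps the F₀-line F₀(f,p) onto the F₁-line F₁(f, f-p): applying C(v,b,r,k,λ) = (v,b,b-r,v-k,b-2r+λ) to the point of F₀(f,p) with parameter Q gives the point of F₁(f,f-p) with parameter Q. -/

import Mathlib

theorem C_maps_F0_to_F1 (f p Q : ℝ) (hf : f ≠ 0) (hp : p ≠ 0) (hfp : f ≠ p) :
    let d := f - p
    -- point of F₀(f,p) at parameter Q
    let v := Q / (p * d) - d / p
    let b := f * Q / (p * d) - f * d / p
    let r := Q / d
    let k := Q / (f * d)
    let l := p * Q / (f * d)
    -- F₁(f', p') with f' = f, p' = f - p, d' = f' - p' = p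
    let f' := f
    let p' := f - p
    let d' := f' - p'
    (v, b, b - r, v - k, b - 2 * r + l) =
      (Q / (p' * d') - p' / d', f' * Q / (p' * d') - f' * p' / d',
       Q / d' - f' * p' / d', Q / (f' * d') - p' / d',
       p' * Q / (f' * d') - f' * p' / d') := by
  have hd : f - p ≠ 0 := sub_ne_zero.mpr hfp
  have hd' : f - (f - p) ≠ 0 := by rw [sub_sub_cancel]; exact hp
  simp only
  refine Prod.ext ?_ (Prod.ext ?_ (Prod.ext ?_ (Prod.ext ?_ ?_))) <;> field_simp <;> ring
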